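/- Let the setting be type A_N or type B_N, let (i_t,k_t), 1 ≤ t ≤ T, be a snake, let (p_1,…,p_T) ∈ P̄_{(i_t,k_t)}, and set m = ∏_{t=1}^T m(p_t) ∈ M. Then: (i) for every (i,ℓ) ∈ X the exponent u_{i,ℓ}(m) of the generator Y_{i,ℓ} in m lies in {−1, 0, 1}; and (ii) for every i ∈ I and every ℓ with (i,ℓ) ∈ X and (i,ℓ+2r_i) ∈ X, it is not the case that u_{i,ℓ}(m) = 1 and u_{i,ℓ+2r_i}(m) = −1. -/

import Mathlib

namespace Paper

/-- The ambient setting: type `A N` (with `N ≥ 1`) or type `B N ε`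
(with `N ≥ 2` and `0 < ε < 1/2`). -/
inductive Setting where
  | A (N : ℕ)
  | B (N : ℕ) (ε : ℝ)

namespace Setting

/-- The rank `N`. -/
def N : Setting → ℕ
  | A n => n
  | B n _ => n

/-- Validity of the parameters of the setting. -/
def valid : Setting → Prop
  | A n => 1 ≤ n
  | B n ε => 2 ≤ n ∧ 0 < ε ∧ ε < 1 / 2

end Setting

/-- The numbers `r_i` : in type A all equal `1`; in type B, `r_N = 1` and `r_i = 2` for `i < N`. -/
def rr : Setting → ℕ → ℕ
  | .A _, _ => 1
  | .B n _, j => if j = n then 1 else 2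

/-- The set `X` in type `A_N`. -/
def XA (n : ℕ) : Set (ℕ × ℤ) :=
  {ik | 1 ≤ ik.1 ∧ ik.1 ≤ n ∧ ((ik.1 : ℤ) - ik.2) % 2 = 1}

/-- The set `X` in type `B_N`. -/
def XB (n : ℕ) : Set (ℕ × ℤ) :=
  {ik | (ik.1 = n ∧ ik.2 % 2 = 1) ∨ (1 ≤ ik.1 ∧ ik.1 < n ∧ ik.2 % 2 = 0)}

/-- The set `X ⊆ I × ℤ`. -/
def X : Setting → Set (ℕ × ℤ)
  | .A n => XA n
  | .B n _ => XB n

/-- The set `W = {(i,k) : (i, k - r_i) ∈ X}`. -/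
def W (S : Setting) : Set (ℕ × ℤ) :=
  {ik | (ik.1, ik.2 - (rr S ik.1 : ℤ)) ∈ X S}

/-- The `r`-th point of a path (a finite list of points of the plane). -/
def pt (p : List (ℝ × ℝ)) (r : ℕ) : ℝ × ℝ := p.getD r (0, 0)

/-- The set of paths `𝒫_{i,k}` in type `A_N`. -/
def pathsA (n : ℕ) (i : ℕ) (k : ℤ) : Set (List (ℝ × ℝ)) :=
  {p | p.length = n + 2 ∧
    (∀ r, r < n + 2 → (pt p r).1 = (r : ℝ)) ∧
    (pt p 0).2 = (i : ℝ) + (k : ℝ) ∧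
    (pt p (n + 1)).2 = (n : ℝ) + 1 - (i : ℝ) + (k : ℝ) ∧
    (∀ r, r ≤ n → (pt p (r + 1)).2 - (pt p r).2 = 1 ∨ (pt p (r + 1)).2 - (pt p r).2 = -1)}

/-- The set of paths `𝒫_{N,ℓ}` in type `B_N`. -/
def pathsBspin (n : ℕ) (ε : ℝ) (l : ℤ) : Set (List (ℝ × ℝ)) :=
  {p | p.length = n + 1 ∧
    (if l % 4 = 3 then ∀ r, r < n → (pt p r).1 = 2 * (r : ℝ)
     else ∀ r, r < n → (pt p r).1 = 4 * (n : ℝ) - 2 - 2 * (r : ℝ)) ∧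
    (pt p n).1 = 2 * (n : ℝ) - 1 ∧
    (pt p 0).2 = (l : ℝ) + 2 * (n : ℝ) - 1 ∧
    (∀ r, r + 2 ≤ n → (pt p (r + 1)).2 - (pt p r).2 = 2 ∨ (pt p (r + 1)).2 - (pt p r).2 = -2) ∧
    ((pt p n).2 - (pt p (n - 1)).2 = 1 + ε ∨ (pt p n).2 - (pt p (n - 1)).2 = -(1 + ε))}

/-- The set of paths `𝒫_{i,k}` in type `B_N`. -/
def pathsB (n : ℕ) (ε : ℝ) (i : ℕ) (k : ℤ) : Set (List (ℝ × ℝ)) :=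
  if i = n then pathsBspin n ε k
  else {p | ∃ a b : List (ℝ × ℝ),
    a ∈ pathsBspin n ε (k - (2 * (n : ℤ) - 2 * (i : ℤ) - 1)) ∧
    b ∈ pathsBspin n ε (k + (2 * (n : ℤ) - 2 * (i : ℤ) - 1)) ∧
    p = a ++ b.reverse ∧
    (pt a n).1 = (pt b n).1 ∧ 0 < (pt a n).2 - (pt b n).2}

/-- The set of paths `𝒫_{i,k}`. -/
def P : Setting → ℕ → ℤ → Set (List (ℝ × ℝ))
  | .A n => pathsA n
  | .B n ε => pathsB n ε

/-- The map `ι : X → ℤ × ℤ` of type `B_N`. -/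
def iotaB (n : ℕ) (ik : ℕ × ℤ) : ℤ × ℤ :=
  if ik.1 = n then (2 * (n : ℤ) - 1, ik.2)
  else if (2 * (n : ℤ) + ik.2 - 2 * (ik.1 : ℤ)) % 4 = 2 then (2 * (ik.1 : ℤ), ik.2)
  else (4 * (n : ℤ) - 2 - 2 * (ik.1 : ℤ), ik.2)

/-- The corners of a path: `Cp S p true` is the set `C_{p,+}` of upper corners, and
`Cp S p false` is the set `C_{p,-}` of lower corners. -/
def Cp (S : Setting) (p : List (ℝ × ℝ)) (up : Bool) : Set (ℕ × ℤ) :=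
  match S with
  | .A n =>
    {jl | 1 ≤ jl.1 ∧ jl.1 ≤ n ∧
      pt p jl.1 = ((jl.1 : ℝ), (jl.2 : ℝ)) ∧
      (pt p (jl.1 - 1)).2 = (jl.2 : ℝ) + (if up then 1 else -1) ∧
      (pt p (jl.1 + 1)).2 = (jl.2 : ℝ) + (if up then 1 else -1)}
  | .B n ε =>
    {jl | jl ∈ XB n ∧
      ((∃ r : ℕ, 1 ≤ r ∧ r + 1 < p.length ∧
          pt p r = (((iotaB n jl).1 : ℝ), ((iotaB n jl).2 : ℝ)) ∧
          (iotaB n jl).1 ≠ 0 ∧ (iotaB n jl).1 ≠ 2 * (n : ℤ) - 1 ∧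
          (iotaB n jl).1 ≠ 4 * (n : ℤ) - 2 ∧
          (if up then (pt p r).2 < (pt p (r - 1)).2 ∧ (pt p r).2 < (pt p (r + 1)).2
           else (pt p (r - 1)).2 < (pt p r).2 ∧ (pt p (r + 1)).2 < (pt p r).2))
       ∨ (jl.1 = n ∧
          (if up then (2 * (n : ℝ) - 1, (jl.2 : ℝ) - ε) ∈ p ∧ (2 * (n : ℝ) - 1, (jl.2 : ℝ) + ε) ∉ p
           else (2 * (n : ℝ) - 1, (jl.2 : ℝ) + ε) ∈ p ∧ (2 * (n : ℝ) - 1, (jl.2 : ℝ) - ε) ∉ p)))}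

/-- `p'` is obtained from `p` by replacing the point `q` by the point `q'`. -/
def Replace1 (p p' : List (ℝ × ℝ)) (q q' : ℝ × ℝ) : Prop :=
  ∃ r : ℕ, r < p.length ∧ pt p r = q ∧ p'.length = p.length ∧ pt p' r = q' ∧
    ∀ s, s < p.length → s ≠ r → pt p' s = pt p s

/-- `p'` is obtained from `p` by replacing the point `q1` by `q1'` and the point `q2` by `q2'`. -/
def Replace2 (p p' : List (ℝ × ℝ)) (q1 q1' q2 q2' : ℝ × ℝ) : Prop :=
  ∃ r s : ℕ, r < p.length ∧ s < p.length ∧ r ≠ s ∧ pt p r = q1 ∧ pt p s = q2 ∧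
    p'.length = p.length ∧ pt p' r = q1' ∧ pt p' s = q2' ∧
    ∀ u, u < p.length → u ≠ r → u ≠ s → pt p' u = pt p u

/-- The path `p` can be lowered at `(j, l)`: `(j, l - r_j) ∈ C_{p,+}` and
`(j, l + r_j) ∉ C_{p,+}`. -/
def CanLower (S : Setting) (p : List (ℝ × ℝ)) (j : ℕ) (l : ℤ) : Prop :=
  (j, l - (rr S j : ℤ)) ∈ Cp S p true ∧ (j, l + (rr S j : ℤ)) ∉ Cp S p true

/-- `p'` is the result of the lowering move at `(j,l)` applied to the path `p ∈ 𝒫_{i,k}`;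
written `p' = p 𝒜_{j,l}⁻¹`. -/
def LoweredTo (S : Setting) (i : ℕ) (k : ℤ) (j : ℕ) (l : ℤ)
    (p p' : List (ℝ × ℝ)) : Prop :=
  p ∈ P S i k ∧ p' ∈ P S i k ∧ CanLower S p j l ∧
  (match S with
   | .A _ => Replace1 p p' ((j : ℝ), (l : ℝ) - 1) ((j : ℝ), (l : ℝ) + 1)
   | .B n ε =>
     if j = n then
       Replace1 p p' (2 * (n : ℝ) - 1, (l : ℝ) - 1 - ε) (2 * (n : ℝ) - 1, (l : ℝ) + 1 + ε)
     else if j = n - 1 then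
       Replace2 p p'
         (((iotaB n (j, l - 2)).1 : ℝ), (l : ℝ) - 2) (((iotaB n (j, l - 2)).1 : ℝ), (l : ℝ) + 2)
         (2 * (n : ℝ) - 1, (l : ℝ) - 1 + ε) (2 * (n : ℝ) - 1, (l : ℝ) + 1 - ε)
     else
       Replace1 p p'
         (((iotaB n (j, l - 2)).1 : ℝ), (l : ℝ) - 2) (((iotaB n (j, l - 2)).1 : ℝ), (l : ℝ) + 2))

/-- The path `p` can be raised at `(j,l)`: it is of the form `p' 𝒜_{j,l}⁻¹`. -/
def CanRaise (S : Setting) (i : ℕ) (k : ℤ) (p : List (ℝ × ℝ)) (j : ℕ) (l : ℤ) : Prop :=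
  ∃ p', LoweredTo S i k j l p' p

/-- The monomial group `ℳ`, realised as exponent functions: the free abelian group on the
symbols `Y_{i,k}`, `(i,k) ∈ X`, is identified with finitely supported functions `(ℕ × ℤ) → ℤ`,
written additively. -/
def Y (x : ℕ × ℤ) : (ℕ × ℤ) → ℤ := fun z => if z = x then 1 else 0

noncomputable def ind (s : Prop) : ℤ := @ite ℤ s (Classical.propDecidable s) 1 0

/-- The monomial `m(p)` of a path: `∏ Y_{j,l}` over upper corners times `∏ Y_{j,l}⁻¹`
over lower corners. -/
noncomputable def mon (S : Setting) (p : List (ℝ × ℝ)) : (ℕ × ℤ) → ℤ :=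
  fun x => ind (x ∈ Cp S p true) - ind (x ∈ Cp S p false)

/-- The monomials `A_{j,l}`, with the conventions `Y_{0,·} = Y_{N+1,·} = 1`. -/
def Amon (S : Setting) (j : ℕ) (l : ℤ) : (ℕ × ℤ) → ℤ :=
  match S with
  | .A n =>
      Y (j, l + 1) + Y (j, l - 1) - (if j = 1 then 0 else Y (j - 1, l))
        - (if j = n then 0 else Y (j + 1, l))
  | .B n _ =>
      if j = n then Y (n, l + 1) + Y (n, l - 1) - Y (n - 1, l)
      else if j = n - 1 then
        Y (n - 1, l + 2) + Y (n - 1, l - 2) - (if j = 1 then 0 else Y (n - 2, l))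
          - Y (n, l + 1) - Y (n, l - 1)
      else
        Y (j, l + 2) + Y (j, l - 2) - (if j = 1 then 0 else Y (j - 1, l)) - Y (j + 1, l)

/-- A monomial is dominant iff all its exponents are nonnegative. -/
def Dominant (m : (ℕ × ℤ) → ℤ) : Prop := ∀ x, 0 ≤ m x

/-- A monomial is anti-dominant iff all its exponents are nonpositive. -/
def AntiDominant (m : (ℕ × ℤ) → ℤ) : Prop := ∀ x, m x ≤ 0

/-- `(i',k')` is in snake position with respect to `(i,k)`. -/
def SnakePos : Setting → ℕ × ℤ → ℕ × ℤ → Prop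
  | .A _, ik, ik' => |(ik'.1 : ℤ) - (ik.1 : ℤ)| + 2 ≤ ik'.2 - ik.2
  | .B n _, ik, ik' =>
      if ik.1 = n ∧ ik'.1 = n then
        2 ≤ ik'.2 - ik.2 ∧ (ik'.2 - ik.2) % 4 = 2
      else if ik.1 = n ∨ ik'.1 = n then
        2 * |(ik'.1 : ℤ) - (ik.1 : ℤ)| + 3 ≤ ik'.2 - ik.2 ∧
          (ik'.2 - ik.2) % 4 = (2 * |(ik'.1 : ℤ) - (ik.1 : ℤ)| - 1) % 4
      else
        2 * |(ik'.1 : ℤ) - (ik.1 : ℤ)| + 4 ≤ ik'.2 - ik.2 ∧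
          (ik'.2 - ik.2) % 4 = (2 * |(ik'.1 : ℤ) - (ik.1 : ℤ)|) % 4

/-- A snake: a sequence of points of `X`, each in snake position w.r.t. the previous one. -/
def IsSnake (S : Setting) {T : ℕ} (w : Fin T → ℕ × ℤ) : Prop :=
  (∀ t, w t ∈ X S) ∧
  ∀ (t : Fin T) (h : (t : ℕ) + 1 < T), SnakePos S (w t) (w ⟨(t : ℕ) + 1, h⟩)

/-- `p` is strictly above `p'`. -/
def StrictlyAbove (p p' : List (ℝ × ℝ)) : Prop :=
  ∀ a ∈ p, ∀ b ∈ p', a.1 = b.1 → a.2 < b.2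

/-- A tuple of paths is non-overlapping. -/
def NonOverlapping {T : ℕ} (ps : Fin T → List (ℝ × ℝ)) : Prop :=
  ∀ s t : Fin T, s < t → StrictlyAbove (ps s) (ps t)

/-- The set `𝒫̄` of non-overlapping tuples of paths attached to a snake. -/
def PBar (S : Setting) {T : ℕ} (w : Fin T → ℕ × ℤ) : Set (Fin T → List (ℝ × ℝ)) :=
  {ps | (∀ t, ps t ∈ P S (w t).1 (w t).2) ∧ NonOverlapping ps}

/-- The product `∏_t m(p_t)` of the monomials of a tuple of paths. -/
noncomputable def tmon (S : Setting) {T : ℕ} (ps : Fin T → List (ℝ × ℝ)) : (ℕ × ℤ) → ℤ :=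
  ∑ t, mon S (ps t)

/-- Lowering move at `jl` on a tuple of paths: one component is lowered, the others
are unchanged. -/
def TLoweredTo (S : Setting) {T : ℕ} (w : Fin T → ℕ × ℤ) (jl : ℕ × ℤ)
    (ps ps' : Fin T → List (ℝ × ℝ)) : Prop :=
  ∃ t, LoweredTo S (w t).1 (w t).2 jl.1 jl.2 (ps t) (ps' t) ∧ ∀ s, s ≠ t → ps' s = ps s

/-- Sequences of raising/lowering moves on a single path; the list records, for each move,
whether it was a lowering move (`true`) or a raising move (`false`), and its site. -/
inductive MoveSeq (S : Setting) (i : ℕ) (k : ℤ) :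
    List (ℝ × ℝ) → List (ℝ × ℝ) → List (Bool × (ℕ × ℤ)) → Prop where
  | nil (p : List (ℝ × ℝ)) : MoveSeq S i k p p []
  | lower {p q r : List (ℝ × ℝ)} {jl : ℕ × ℤ} {ms : List (Bool × (ℕ × ℤ))} :
      jl ∈ W S → LoweredTo S i k jl.1 jl.2 p q → MoveSeq S i k q r ms →
      MoveSeq S i k p r ((true, jl) :: ms)
  | raise {p q r : List (ℝ × ℝ)} {jl : ℕ × ℤ} {ms : List (Bool × (ℕ × ℤ))} :
      jl ∈ W S → LoweredTo S i k jl.1 jl.2 q p → MoveSeq S i k q r ms →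
      MoveSeq S i k p r ((false, jl) :: ms)

/-- Sequences of raising/lowering moves on tuples of paths, all of whose intermediate
tuples are non-overlapping. -/
inductive TMoveSeq (S : Setting) {T : ℕ} (w : Fin T → ℕ × ℤ) :
    (Fin T → List (ℝ × ℝ)) → (Fin T → List (ℝ × ℝ)) → List (Bool × (ℕ × ℤ)) → Prop where
  | nil (ps : Fin T → List (ℝ × ℝ)) : TMoveSeq S w ps ps []
  | lower {ps qs rs : Fin T → List (ℝ × ℝ)} {jl : ℕ × ℤ} {ms : List (Bool × (ℕ × ℤ))} :
      jl ∈ W S → TLoweredTo S w jl ps qs → NonOverlapping qs →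
      TMoveSeq S w qs rs ms → TMoveSeq S w ps rs ((true, jl) :: ms)
  | raise {ps qs rs : Fin T → List (ℝ × ℝ)} {jl : ℕ × ℤ} {ms : List (Bool × (ℕ × ℤ))} :
      jl ∈ W S → TLoweredTo S w jl qs ps → NonOverlapping qs →
      TMoveSeq S w qs rs ms → TMoveSeq S w ps rs ((false, jl) :: ms)

/-- Sequences of lowering moves on tuples of paths, all of whose intermediate tuples
are non-overlapping; the list records the sites, in order. -/
inductive TLowerSeq (S : Setting) {T : ℕ} (w : Fin T → ℕ × ℤ) :
    (Fin T → List (ℝ × ℝ)) → (Fin T → List (ℝ × ℝ)) → List (ℕ × ℤ) → Prop where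
  | nil (ps : Fin T → List (ℝ × ℝ)) : TLowerSeq S w ps ps []
  | cons {ps qs rs : Fin T → List (ℝ × ℝ)} {jl : ℕ × ℤ} {ms : List (ℕ × ℤ)} :
      jl ∈ W S → TLoweredTo S w jl ps qs → NonOverlapping qs →
      TLowerSeq S w qs rs ms → TLowerSeq S w ps rs (jl :: ms)

/-- Weak order on paths with the same x-coordinates: `p` is weakly above `p'`. -/
def WeaklyAbove (p p' : List (ℝ × ℝ)) : Prop :=
  p.length = p'.length ∧ ∀ r, r < p.length → (pt p r).2 ≤ (pt p' r).2

/-- `p` is weakly below `p'`. -/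
def WeaklyBelow (p p' : List (ℝ × ℝ)) : Prop :=
  p.length = p'.length ∧ ∀ r, r < p.length → (pt p' r).2 ≤ (pt p r).2

/-- The path `top(p, p')`. -/
def topPath (p p' : List (ℝ × ℝ)) : List (ℝ × ℝ) :=
  List.zipWith (fun a b => (a.1, min a.2 b.2)) p p'

/-- The distinguished point contained in the highest path `p⁺_{i,k}`. -/
def highPoint : Setting → ℕ → ℤ → ℝ × ℝ
  | .A _, i, k => ((i : ℝ), (k : ℝ))
  | .B n ε, i, k =>
      if i = n then (2 * (n : ℝ) - 1, (k : ℝ) - ε)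
      else (((iotaB n (i, k)).1 : ℝ), ((iotaB n (i, k)).2 : ℝ))

/-- The distinguished point contained in the lowest path `p⁻_{i,k}`. -/
def lowPoint : Setting → ℕ → ℤ → ℝ × ℝ
  | .A n, i, k => ((n : ℝ) + 1 - (i : ℝ), (k : ℝ) + (n : ℝ) + 1)
  | .B n ε, i, k =>
      if i = n then (2 * (n : ℝ) - 1, (k : ℝ) + 4 * (n : ℝ) - 2 + ε)
      else (((iotaB n (i, k + 4 * (n : ℤ) - 2)).1 : ℝ),
            ((iotaB n (i, k + 4 * (n : ℤ) - 2)).2 : ℝ))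

/-- The highest path `p⁺_{i,k}` : the path of `𝒫_{i,k}` with no lower corners. -/
noncomputable def highestPath (S : Setting) (i : ℕ) (k : ℤ) : List (ℝ × ℝ) :=
  Classical.epsilon fun p => p ∈ P S i k ∧ Cp S p false = ∅

/-- The lowest path `p⁻_{i,k}` : the path of `𝒫_{i,k}` with no upper corners. -/
noncomputable def lowestPath (S : Setting) (i : ℕ) (k : ℤ) : List (ℝ × ℝ) :=
  Classical.epsilon fun p => p ∈ P S i k ∧ Cp S p true = ∅


/-! ### Auxiliary lemmas -/

lemma pt_mem {p : List (ℝ×ℝ)} {r : ℕ} (h : r < p.length) : pt p r ∈ p := by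
  rw [pt, List.getD_eq_getElem _ _ h]; exact List.getElem_mem h

lemma mem_iff_pt {q : ℝ×ℝ} {p : List (ℝ×ℝ)} : q ∈ p ↔ ∃ r, r < p.length ∧ pt p r = q := by
  rw [List.mem_iff_getElem]
  constructor
  · rintro ⟨r, h, rfl⟩; exact ⟨r, h, by rw [pt, List.getD_eq_getElem _ _ h]⟩
  · rintro ⟨r, h, hq⟩; exact ⟨r, h, by rw [← hq, pt, List.getD_eq_getElem _ _ h]⟩

lemma ind_range (s : Prop) : ind s = 0 ∨ ind s = 1 := by unfold ind; split <;> simp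

lemma ind_eq_one_iff (s : Prop) : ind s = 1 ↔ s := by unfold ind; split <;> simp_all

lemma ind_eq_zero_iff (s : Prop) : ind s = 0 ↔ ¬ s := by unfold ind; split <;> simp_all

lemma sum_aux {T : ℕ} (f : Fin T → ℤ) (hf : ∀ t, f t = -1 ∨ f t = 0 ∨ f t = 1)
    (h1 : ∀ s t, f s = 1 → f t = 1 → s = t)
    (h2 : ∀ s t, f s = -1 → f t = -1 → s = t) :
    (∑ t, f t = -1 ∨ ∑ t, f t = 0 ∨ ∑ t, f t = 1) ∧
    (∑ t, f t = 1 → ∃ t, f t = 1 ∧ ∀ u, f u ≠ -1) ∧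
    (∑ t, f t = -1 → ∃ t, f t = -1 ∧ ∀ u, f u ≠ 1) := by
  classical
  set A := Finset.univ.filter (fun t => f t = 1) with hA
  set B := Finset.univ.filter (fun t => f t = -1) with hB
  have hsum : ∑ t, f t = (A.card : ℤ) - B.card := by
    have h : ∀ t, f t = (if f t = 1 then (1:ℤ) else 0) - (if f t = -1 then 1 else 0) := by
      intro t; rcases hf t with h|h|h <;> rw [h] <;> norm_num
    rw [Finset.sum_congr rfl (fun t _ => h t), Finset.sum_sub_distrib]
    simp [hA, hB, Finset.sum_boole]
  have hAc : A.card ≤ 1 := Finset.card_le_one.mpr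
    (fun a ha b hb => h1 a b (by simpa [hA] using ha) (by simpa [hA] using hb))
  have hBc : B.card ≤ 1 := Finset.card_le_one.mpr
    (fun a ha b hb => h2 a b (by simpa [hB] using ha) (by simpa [hB] using hb))
  refine ⟨by omega, ?_, ?_⟩
  · intro h
    rw [hsum] at h
    obtain ⟨t, ht⟩ := Finset.card_pos.mp (by omega : 0 < A.card)
    refine ⟨t, by simpa [hA] using ht, fun u hu => ?_⟩
    have hu' : u ∈ B := by simp [hB, hu]
    have hc : B.card = 0 := by omega
    simp [Finset.card_eq_zero.mp hc] at hu'
  · intro h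
    rw [hsum] at h
    obtain ⟨t, ht⟩ := Finset.card_pos.mp (by omega : 0 < B.card)
    refine ⟨t, by simpa [hB] using ht, fun u hu => ?_⟩
    have hu' : u ∈ A := by simp [hA, hu]
    have hc : A.card = 0 := by omega
    simp [Finset.card_eq_zero.mp hc] at hu'

lemma mon_range (S : Setting) (p : List (ℝ×ℝ)) (x : ℕ×ℤ) :
    mon S p x = -1 ∨ mon S p x = 0 ∨ mon S p x = 1 := by
  unfold mon
  rcases ind_range (x ∈ Cp S p true) with h|h <;> rcases ind_range (x ∈ Cp S p false) with h'|h' <;>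
    rw [h, h'] <;> norm_num

lemma mon_eq_one_iff (S : Setting) (p : List (ℝ×ℝ)) (x : ℕ×ℤ) :
    mon S p x = 1 ↔ (x ∈ Cp S p true ∧ x ∉ Cp S p false) := by
  have hA := ind_range (x ∈ Cp S p true)
  have hB := ind_range (x ∈ Cp S p false)
  unfold mon
  constructor
  · intro h
    have h1 : ind (x ∈ Cp S p true) = 1 := by rcases hA with h'|h' <;> rcases hB with h''|h'' <;> omega
    have h2 : ind (x ∈ Cp S p false) = 0 := by rcases hA with h'|h' <;> rcases hB with h''|h'' <;> omega
    exact ⟨(ind_eq_one_iff _).mp h1, (ind_eq_zero_iff _).mp h2⟩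
  · rintro ⟨h1, h2⟩
    rw [(ind_eq_one_iff _).mpr h1, (ind_eq_zero_iff _).mpr h2]
    norm_num

lemma mon_eq_neg_one_iff (S : Setting) (p : List (ℝ×ℝ)) (x : ℕ×ℤ) :
    mon S p x = -1 ↔ (x ∈ Cp S p false ∧ x ∉ Cp S p true) := by
  have hA := ind_range (x ∈ Cp S p true)
  have hB := ind_range (x ∈ Cp S p false)
  unfold mon
  constructor
  · intro h
    have h1 : ind (x ∈ Cp S p false) = 1 := by rcases hA with h'|h' <;> rcases hB with h''|h'' <;> omega
    have h2 : ind (x ∈ Cp S p true) = 0 := by rcases hA with h'|h' <;> rcases hB with h''|h'' <;> omega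
    exact ⟨(ind_eq_one_iff _).mp h1, (ind_eq_zero_iff _).mp h2⟩
  · rintro ⟨h1, h2⟩
    rw [(ind_eq_one_iff _).mpr h1, (ind_eq_zero_iff _).mpr h2]
    norm_num

/-- The distinguished plane point witnessing a corner. -/
noncomputable def keyPt (S : Setting) (x : ℕ × ℤ) (up : Bool) : ℝ × ℝ :=
  match S with
  | .A _ => ((x.1:ℝ), (x.2:ℝ))
  | .B n ε => if x.1 = n then (2*(n:ℝ) - 1, (x.2:ℝ) - (if up then ε else -ε))
      else (((iotaB n x).1 : ℝ), ((iotaB n x).2 : ℝ))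

lemma key_mem {S : Setting} {x : ℕ×ℤ} {p : List (ℝ×ℝ)} {up : Bool}
    (h : x ∈ Cp S p up) : keyPt S x up ∈ p := by
  match S with
  | .A n =>
    obtain ⟨h1, h2, h3, _⟩ := h
    have hlt : x.1 < p.length := by
      by_contra hc
      rw [pt, List.getD_eq_default p (0,0) (by omega)] at h3
      have h0 := congrArg Prod.fst h3
      simp only [Prod.fst] at h0
      have : (x.1 : ℝ) = 0 := h0.symm
      have : x.1 = 0 := by exact_mod_cast this
      omega
    rw [keyPt, ← h3]
    exact pt_mem hlt
  | .B n ε =>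
    obtain ⟨hX, hbr⟩ := h
    by_cases hn : x.1 = n
    · rcases hbr with ⟨r, _, _, _, _, hne, _, _⟩ | ⟨_, hmem⟩
      · exact absurd (by rw [iotaB, if_pos hn]) hne
      · rw [keyPt, if_pos hn]
        cases up
        · simpa [sub_neg_eq_add] using hmem.1
        · simpa using hmem.1
    · rcases hbr with ⟨r, hr1, hr2, hpt, _⟩ | ⟨hn', _⟩
      · rw [keyPt, if_neg hn, ← hpt]; exact pt_mem (by omega)
      · exact absurd hn' hn

/-! ### ε-arithmetic -/

section EpsLemmas
variable {ε : ℝ} (hε : 0 < ε) (hε2 : ε < 1/2)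
include hε hε2
set_option linter.unusedSectionVars false

lemma eps_pm {c c' : ℤ} (h : (c:ℝ) + ε = (c':ℝ) - ε) : False := by
  have h1 : (c:ℝ) < c' := by linarith
  have h2 : (c':ℝ) < c + 1 := by linarith
  have h1' : c < c' := by exact_mod_cast h1
  have h2' : (c':ℝ) < ((c+1 : ℤ) : ℝ) := by push_cast; linarith
  have h2'' : c' < c + 1 := by exact_mod_cast h2'
  omega

lemma eps_interval {c l : ℤ} (hc : c % 2 = 1) (hl : l % 2 = 1) {y : ℝ}
    (hy : y = (c:ℝ) + ε ∨ y = (c:ℝ) - ε)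
    (h1 : (l:ℝ) - ε < y) (h2 : y < (l:ℝ) + 2 + ε) :
    y = (l:ℝ) + ε ∨ y = (l:ℝ) + 2 - ε := by
  rcases hy with hy | hy
  · left
    have b1 : (l:ℝ) < c + 1 := by linarith
    have b2 : (c:ℝ) < l + 2 := by linarith
    have b1' : l < c + 1 := by exact_mod_cast (by push_cast; linarith : (l:ℝ) < ((c+1:ℤ):ℝ))
    have b2' : c < l + 2 := by exact_mod_cast (by push_cast; linarith : (c:ℝ) < ((l+2:ℤ):ℝ))
    have : c = l := by omega
    rw [hy, this]
  · right
    have b1 : (l:ℝ) < c := by linarith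
    have b2 : (c:ℝ) < l + 3 := by linarith
    have b1' : l < c := by exact_mod_cast b1
    have b2' : c < l + 3 := by exact_mod_cast (by push_cast; linarith : (c:ℝ) < ((l+3:ℤ):ℝ))
    have : c = l + 2 := by omega
    rw [hy, this]; push_cast; ring

lemma end_id_minus {m l : ℤ} {y : ℝ}
    (hspec : ∃ c : ℤ, (y = (c:ℝ) + ε ∧ c % 4 = (m+2) % 4) ∨ (y = (c:ℝ) - ε ∧ c % 4 = m % 4))
    (hy : y = (l:ℝ) - ε) : l % 4 = m % 4 := by
  obtain ⟨c, ⟨h1, h2⟩ | ⟨h1, h2⟩⟩ := hspec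
  · exact absurd (h1.symm.trans hy) (fun h => eps_pm hε hε2 h)
  · have : (c:ℝ) = l := by rw [hy] at h1; linarith
    have : c = l := by exact_mod_cast this
    omega

lemma end_id_plus {m l : ℤ} {y : ℝ}
    (hspec : ∃ c : ℤ, (y = (c:ℝ) + ε ∧ c % 4 = (m+2) % 4) ∨ (y = (c:ℝ) - ε ∧ c % 4 = m % 4))
    (hy : y = (l:ℝ) + ε) : l % 4 = (m+2) % 4 := by
  obtain ⟨c, ⟨h1, h2⟩ | ⟨h1, h2⟩⟩ := hspec
  · have : (c:ℝ) = l := by rw [hy] at h1; linarith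
    have : c = l := by exact_mod_cast this
    omega
  · exact (eps_pm hε hε2 (hy.symm.trans h1)).elim

end EpsLemmas

/-! ### x-coordinate profiles of type B paths -/

/-- The `x`-coordinate of the `r`-th point of a type-B path with orientation `o`. -/
def xvalZ (n : ℕ) (o : Bool) (r : ℕ) : ℤ :=
  if r ≤ n - 1 then (if o then 2*(r:ℤ) else 4*(n:ℤ) - 2 - 2*r)
  else if r ≤ n + 1 then 2*(n:ℤ) - 1
  else (if o then 2*(r:ℤ) - 4 else 4*(n:ℤ) + 2 - 2*r)

lemma spin_x3 {n : ℕ} {ε : ℝ} {l : ℤ} {p : List (ℝ×ℝ)} (hn : 1 ≤ n)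
    (hp : p ∈ pathsBspin n ε l) (h3 : l % 4 = 3) :
    ∀ r, r < n + 1 → (pt p r).1 = ((xvalZ n true r : ℤ) : ℝ) := by
  obtain ⟨h1, hor, hend, -⟩ := hp
  rw [if_pos h3] at hor
  intro r hr
  by_cases hc : r ≤ n - 1
  · rw [hor r (by omega), xvalZ, if_pos hc, if_pos rfl]; push_cast; ring
  · have : r = n := by omega
    subst this
    rw [hend, xvalZ, if_neg hc, if_pos (by omega)]; push_cast; ring

lemma spin_x1 {n : ℕ} {ε : ℝ} {l : ℤ} {p : List (ℝ×ℝ)} (hn : 1 ≤ n)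
    (hp : p ∈ pathsBspin n ε l) (h3 : ¬ l % 4 = 3) :
    ∀ r, r < n + 1 → (pt p r).1 = ((xvalZ n false r : ℤ) : ℝ) := by
  obtain ⟨h1, hor, hend, -⟩ := hp
  rw [if_neg h3] at hor
  intro r hr
  by_cases hc : r ≤ n - 1
  · rw [hor r (by omega), xvalZ, if_pos hc, if_neg (by simp)]; push_cast; ring
  · have : r = n := by omega
    subst this
    rw [hend, xvalZ, if_neg hc, if_pos (by omega)]; push_cast; ring

lemma spin_parity {n : ℕ} {ε : ℝ} {l : ℤ} {p : List (ℝ×ℝ)} (hn : 1 ≤ n)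
    (hp : p ∈ pathsBspin n ε l) :
    ∀ r, r ≤ n - 1 → ∃ m : ℤ, (pt p r).2 = (l:ℝ) + 2*n - 1 + 2*m ∧ m % 2 = (r:ℤ) % 2 := by
  intro r
  induction r with
  | zero =>
    intro _
    exact ⟨0, by rw [hp.2.2.2.1]; push_cast; ring, by simp⟩
  | succ r ih =>
    intro hr
    obtain ⟨m, hm, hm2⟩ := ih (by omega)
    rcases hp.2.2.2.2.1 r (by omega) with h | h
    · exact ⟨m + 1, by push_cast; linarith, by push_cast; omega⟩
    · exact ⟨m - 1, by push_cast; linarith, by push_cast; omega⟩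

lemma spin_end {n : ℕ} {ε : ℝ} {l : ℤ} {p : List (ℝ×ℝ)} (hn : 1 ≤ n)
    (hp : p ∈ pathsBspin n ε l) :
    ∃ c : ℤ, ((pt p n).2 = (c:ℝ) + ε ∧ c % 4 = (l+2) % 4) ∨
             ((pt p n).2 = (c:ℝ) - ε ∧ c % 4 = l % 4) := by
  obtain ⟨m, hm, hm2⟩ := spin_parity hn hp (n-1) le_rfl
  have hcast : ((n-1 : ℕ) : ℤ) = (n : ℤ) - 1 := by omega
  rw [hcast] at hm2
  rcases hp.2.2.2.2.2 with h | h
  · refine ⟨l + 2*n + 2*m, Or.inl ⟨?_, by omega⟩⟩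
    push_cast
    linarith
  · refine ⟨l + 2*n - 2 + 2*m, Or.inr ⟨?_, by omega⟩⟩
    push_cast
    linarith

/-! ### Decomposition of composite type B paths -/

lemma comp_decomp {n : ℕ} {ε : ℝ} {i : ℕ} {k : ℤ} {p : List (ℝ×ℝ)} (hi : i ≠ n)
    (hp : p ∈ pathsB n ε i k) :
    ∃ a b : List (ℝ×ℝ),
      a ∈ pathsBspin n ε (k - (2*(n:ℤ) - 2*(i:ℤ) - 1)) ∧
      b ∈ pathsBspin n ε (k + (2*(n:ℤ) - 2*(i:ℤ) - 1)) ∧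
      p.length = 2*n + 2 ∧
      (∀ r, r ≤ n → pt p r = pt a r) ∧
      (∀ r, n + 1 ≤ r → r ≤ 2*n + 1 → pt p r = pt b (2*n + 1 - r)) ∧
      (pt a n).1 = (pt b n).1 ∧ (pt b n).2 < (pt a n).2 := by
  rw [pathsB, if_neg hi] at hp
  obtain ⟨a, b, ha, hb, rfl, hxx, hyy⟩ := hp
  have hal : a.length = n + 1 := ha.1
  have hbl : b.length = n + 1 := hb.1
  have hlen : (a ++ b.reverse).length = 2*n + 2 := by simp [hal, hbl]; omega
  refine ⟨a, b, ha, hb, hlen, ?_, ?_, hxx, by linarith⟩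
  · intro r hr
    rw [pt, pt, List.getD_eq_getElem _ _ (by omega : r < (a ++ b.reverse).length),
        List.getElem_append_left (by omega), List.getD_eq_getElem _ _ (by omega)]
  · intro r hr1 hr2
    rw [pt, pt, List.getD_eq_getElem _ _ (by omega : r < (a ++ b.reverse).length),
        List.getElem_append_right (by omega), List.getElem_reverse,
        List.getD_eq_getElem _ _ (by simp [hbl]; omega)]
    congr 1
    simp [hal, hbl]
    omega

lemma path_len {n : ℕ} {ε : ℝ} {i : ℕ} {k : ℤ} {p : List (ℝ×ℝ)}
    (hp : p ∈ pathsB n ε i k) :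
    (i = n ∧ p.length = n + 1) ∨ (i ≠ n ∧ p.length = 2*n + 2) := by
  by_cases hi : i = n
  · left
    refine ⟨hi, ?_⟩
    rw [pathsB, if_pos hi] at hp
    exact hp.1
  · right
    obtain ⟨a, b, -, -, h, -⟩ := comp_decomp hi hp
    exact ⟨hi, h⟩

/-- x-coordinate profile of a path of the type-B system. -/
lemma path_x {n : ℕ} {ε : ℝ} {i : ℕ} {k : ℤ} {p : List (ℝ×ℝ)} (hn : 1 ≤ n)
    (hik : (i,k) ∈ XB n) (hp : p ∈ pathsB n ε i k) :
    ∃ o : Bool, ∀ r, r < p.length → (pt p r).1 = ((xvalZ n o r : ℤ) : ℝ) := by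
  by_cases hi : i = n
  · have hodd : k % 2 = 1 := by
      rcases hik with ⟨-, h⟩ | ⟨-, h, -⟩ <;> omega
    rw [pathsB, if_pos hi] at hp
    have hl : p.length = n + 1 := hp.1
    by_cases h3 : k % 4 = 3
    · exact ⟨true, fun r hr => spin_x3 hn hp h3 r (by omega)⟩
    · exact ⟨false, fun r hr => spin_x1 hn hp h3 r (by omega)⟩
  · have hkev : k % 2 = 0 := by
      rcases hik with ⟨h, -⟩ | ⟨-, -, h⟩
      · exact absurd h hi
      · exact h
    obtain ⟨a, b, ha, hb, hlen, hpa, hpb, -, -⟩ := comp_decomp hi hp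
    set d : ℤ := 2*(n:ℤ) - 2*(i:ℤ) - 1 with hd
    have hdodd : d % 2 = 1 := by omega
    by_cases h3 : (k - d) % 4 = 3
    · have h3b : ¬ (k + d) % 4 = 3 := by omega
      refine ⟨true, fun r hr => ?_⟩
      rw [hlen] at hr
      by_cases hc : r ≤ n
      · rw [hpa r hc]
        exact spin_x3 hn ha h3 r (by omega)
      · rw [hpb r (by omega) (by omega)]
        rw [spin_x1 hn hb h3b (2*n+1-r) (by omega)]
        congr 1
        rw [xvalZ, xvalZ]
        split_ifs <;> first | omega | simp_all
    · have h3b : (k + d) % 4 = 3 := by omega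
      refine ⟨false, fun r hr => ?_⟩
      rw [hlen] at hr
      by_cases hc : r ≤ n
      · rw [hpa r hc]
        exact spin_x1 hn ha h3 r (by omega)
      · rw [hpb r (by omega) (by omega)]
        rw [spin_x3 hn hb h3b (2*n+1-r) (by omega)]
        congr 1
        rw [xvalZ, xvalZ]
        split_ifs <;> first | omega | simp_all

/-- Uniqueness of the index with a given x-coordinate off the spin line. -/
lemma path_uniq {n : ℕ} {ε : ℝ} {i : ℕ} {k : ℤ} {p : List (ℝ×ℝ)} (hn : 1 ≤ n)
    (hik : (i,k) ∈ XB n) (hp : p ∈ pathsB n ε i k) {r r' : ℕ}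
    (h : r < p.length) (h' : r' < p.length) (heq : (pt p r).1 = (pt p r').1)
    (hne : (pt p r).1 ≠ 2*(n:ℝ) - 1) : r = r' := by
  obtain ⟨o, ho⟩ := path_x hn hik hp
  rw [ho r h, ho r' h'] at heq
  rw [ho r h] at hne
  have heq' : xvalZ n o r = xvalZ n o r' := by exact_mod_cast heq
  have hne' : xvalZ n o r ≠ 2*(n:ℤ) - 1 := by
    intro hc
    apply hne
    rw [hc]
    push_cast
    ring
  have hlen := path_len hp
  have hb1 : r < 2*n + 2 := by rcases hlen with ⟨-, hl⟩ | ⟨-, hl⟩ <;> omega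
  have hb2 : r' < 2*n + 2 := by rcases hlen with ⟨-, hl⟩ | ⟨-, hl⟩ <;> omega
  simp only [xvalZ] at heq' hne'
  rcases o with _ | _ <;> split_ifs at heq' hne' <;> first | omega | simp_all

lemma cast2n1 (n : ℕ) : ((2*(n:ℤ)-1 : ℤ):ℝ) = 2*(n:ℝ)-1 := by push_cast; ring

lemma spin_step {n : ℕ} {ε : ℝ} {l : ℤ} {p : List (ℝ×ℝ)} (hn : 1 ≤ n)
    (hp : p ∈ pathsBspin n ε l) {r : ℕ} (hr1 : 1 ≤ r) (hr2 : r ≤ n - 1) :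
    (pt p r).1 ≠ 2*(n:ℝ) - 1 ∧
    (pt p (r-1)).1 = (pt p r).1 + (if (pt p r).1 < 2*(n:ℝ) - 1 then (-2:ℝ) else 2) ∧
    ((pt p (r-1)).2 = (pt p r).2 + 2 ∨ (pt p (r-1)).2 = (pt p r).2 - 2) := by
  have hstep := hp.2.2.2.2.1 (r-1) (by omega)
  have e : r - 1 + 1 = r := by omega
  rw [e] at hstep
  have hy : (pt p (r-1)).2 = (pt p r).2 + 2 ∨ (pt p (r-1)).2 = (pt p r).2 - 2 := by
    rcases hstep with h | h
    · right; linarith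
    · left; linarith
  by_cases h3 : l % 4 = 3
  · have hxr := spin_x3 hn hp h3 r (by omega)
    have hxr1 := spin_x3 hn hp h3 (r-1) (by omega)
    have hlt : (pt p r).1 < 2*(n:ℝ) - 1 := by
      rw [hxr, ← cast2n1]
      exact_mod_cast (by rw [xvalZ]; split_ifs <;> first | omega | simp_all : xvalZ n true r < 2*(n:ℤ) - 1)
    refine ⟨ne_of_lt hlt, ?_, hy⟩
    rw [if_pos hlt, hxr, hxr1]
    have h5 : xvalZ n true (r-1) = xvalZ n true r - 2 := by
      simp only [xvalZ]; split_ifs <;> first | omega | simp_all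
    rw [h5]; push_cast; ring
  · have hxr := spin_x1 hn hp h3 r (by omega)
    have hxr1 := spin_x1 hn hp h3 (r-1) (by omega)
    have hlt : 2*(n:ℝ) - 1 < (pt p r).1 := by
      rw [hxr, ← cast2n1]
      exact_mod_cast (by rw [xvalZ]; split_ifs <;> first | omega | simp_all :
        2*(n:ℤ) - 1 < xvalZ n false r)
    refine ⟨(ne_of_lt hlt).symm, ?_, hy⟩
    rw [if_neg (by linarith), hxr, hxr1]
    have h5 : xvalZ n false (r-1) = xvalZ n false r + 2 := by
      simp only [xvalZ]; split_ifs <;> first | omega | simp_all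
    rw [h5]; push_cast; ring

lemma path_nbr {n : ℕ} {ε : ℝ} {i : ℕ} {k : ℤ} {p : List (ℝ×ℝ)} (hn : 1 ≤ n)
    (hp : p ∈ pathsB n ε i k) {r : ℕ}
    (hr1 : 1 ≤ r) (hr2 : r + 1 < p.length) (hne : (pt p r).1 ≠ 2*(n:ℝ) - 1) :
    ∃ r', r' < p.length ∧ (r' = r - 1 ∨ r' = r + 1) ∧
      (pt p r').1 = (pt p r).1 + (if (pt p r).1 < 2*(n:ℝ) - 1 then (-2:ℝ) else 2) ∧
      ((pt p r').2 = (pt p r).2 + 2 ∨ (pt p r').2 = (pt p r).2 - 2) := by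
  by_cases hi : i = n
  · rw [pathsB, if_pos hi] at hp
    have hl : p.length = n + 1 := hp.1
    obtain ⟨-, h2, h3⟩ := spin_step hn hp hr1 (by omega)
    exact ⟨r-1, by omega, Or.inl rfl, h2, h3⟩
  · obtain ⟨a, b, ha, hb, hlen, hpa, hpb, hjx, -⟩ := comp_decomp hi hp
    rcases lt_or_ge r n with hc | hc
    · obtain ⟨-, h2, h3⟩ := spin_step hn ha hr1 (by omega)
      rw [← hpa r (by omega), ← hpa (r-1) (by omega)] at h2 h3
      exact ⟨r-1, by omega, Or.inl rfl, h2, h3⟩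
    · rcases lt_or_ge r (n+2) with hc2 | hc2
      · exfalso
        apply hne
        rcases (by omega : r = n ∨ r = n+1) with h | h
        · rw [h, hpa n le_rfl]; exact ha.2.2.1
        · rw [h, hpb (n+1) (by omega) (by omega), (by omega : 2*n+1-(n+1) = n)]
          exact hb.2.2.1
      · have hrb : r ≤ 2*n := by omega
        obtain ⟨-, h2, h3⟩ := spin_step hn hb (r := 2*n+1-r) (by omega) (by omega)
        rw [(by omega : 2*n+1-r-1 = 2*n+1-(r+1))] at h2 h3
        rw [← hpb r (by omega) (by omega), ← hpb (r+1) (by omega) (by omega)] at h2 h3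
        exact ⟨r+1, by omega, Or.inr rfl, h2, h3⟩

lemma spin_spinpts {n : ℕ} {ε : ℝ} {k : ℤ} {p : List (ℝ×ℝ)} (hn : 1 ≤ n)
    (hik : ((n:ℕ),k) ∈ XB n) (hp : p ∈ pathsBspin n ε k) :
    ∃ y : ℝ, (2*(n:ℝ)-1, y) ∈ p ∧ (∀ q ∈ p, q.1 = 2*(n:ℝ)-1 → q.2 = y) ∧
      (∃ c : ℤ, (y = (c:ℝ) + ε ∧ c % 4 = (k+2) % 4) ∨ (y = (c:ℝ) - ε ∧ c % 4 = k % 4)) := by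
  have hl : p.length = n + 1 := hp.1
  have hp' : p ∈ pathsB n ε n k := by rw [pathsB, if_pos rfl]; exact hp
  refine ⟨(pt p n).2, ?_, ?_, spin_end hn hp⟩
  · have h1 : pt p n = (2*(n:ℝ)-1, (pt p n).2) := Prod.ext hp.2.2.1 rfl
    rw [← h1]; exact pt_mem (by omega)
  · intro q hq hq1
    obtain ⟨r, hr, rfl⟩ := mem_iff_pt.mp hq
    obtain ⟨o, ho⟩ := path_x hn hik hp'
    rw [ho r hr] at hq1
    have hz : xvalZ n o r = 2*(n:ℤ)-1 := by exact_mod_cast hq1.trans (cast2n1 n).symm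
    have hrn : r = n := by
      rw [hl] at hr
      rw [xvalZ] at hz
      rcases o <;> split_ifs at hz <;> first | omega | simp_all
    rw [hrn]

lemma comp_spinpts {n : ℕ} {ε : ℝ} {i : ℕ} {k : ℤ} {p : List (ℝ×ℝ)} (hn : 1 ≤ n)
    (hik : (i,k) ∈ XB n) (hi : i ≠ n) (hp : p ∈ pathsB n ε i k) :
    ∃ ya yb : ℝ, (2*(n:ℝ)-1, ya) ∈ p ∧ (2*(n:ℝ)-1, yb) ∈ p ∧ yb < ya ∧
      (∀ q ∈ p, q.1 = 2*(n:ℝ)-1 → q.2 = ya ∨ q.2 = yb) ∧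
      (∃ c : ℤ, (ya = (c:ℝ)+ε ∧ c % 4 = ((k - (2*(n:ℤ)-2*(i:ℤ)-1))+2) % 4) ∨
                (ya = (c:ℝ)-ε ∧ c % 4 = (k - (2*(n:ℤ)-2*(i:ℤ)-1)) % 4)) ∧
      (∃ c : ℤ, (yb = (c:ℝ)+ε ∧ c % 4 = ((k + (2*(n:ℤ)-2*(i:ℤ)-1))+2) % 4) ∨
                (yb = (c:ℝ)-ε ∧ c % 4 = (k + (2*(n:ℤ)-2*(i:ℤ)-1)) % 4)) := by
  obtain ⟨a, b, ha, hb, hlen, hpa, hpb, hjx, hjy⟩ := comp_decomp hi hp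
  have e : 2*n+1-(n+1) = n := by omega
  refine ⟨(pt a n).2, (pt b n).2, ?_, ?_, hjy, ?_, spin_end hn ha, spin_end hn hb⟩
  · have h1 : pt a n = (2*(n:ℝ)-1, (pt a n).2) := Prod.ext ha.2.2.1 rfl
    rw [← h1, ← hpa n le_rfl]; exact pt_mem (by omega)
  · have h1 : pt b n = (2*(n:ℝ)-1, (pt b n).2) := Prod.ext hb.2.2.1 rfl
    have h2 : pt p (n+1) = pt b n := by rw [hpb (n+1) (by omega) (by omega), e]
    rw [← h1, ← h2]; exact pt_mem (by omega)
  · intro q hq hq1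
    obtain ⟨r, hr, rfl⟩ := mem_iff_pt.mp hq
    obtain ⟨o, ho⟩ := path_x hn hik hp
    rw [ho r hr] at hq1
    have hz : xvalZ n o r = 2*(n:ℤ)-1 := by exact_mod_cast hq1.trans (cast2n1 n).symm
    have hrn : r = n ∨ r = n+1 := by
      rw [hlen] at hr
      rw [xvalZ] at hz
      rcases o <;> split_ifs at hz <;> first | omega | simp_all
    rcases hrn with h | h
    · left; rw [h, hpa n le_rfl]
    · right; rw [h, hpb (n+1) (by omega) (by omega), e]

lemma any_spinpt {n : ℕ} {ε : ℝ} {i : ℕ} {k : ℤ} {p : List (ℝ×ℝ)} (hn : 1 ≤ n)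
    (hik : (i,k) ∈ XB n) (hp : p ∈ pathsB n ε i k) :
    ∃ y : ℝ, (2*(n:ℝ)-1, y) ∈ p ∧ ∃ c : ℤ, c % 2 = 1 ∧ (y = (c:ℝ)+ε ∨ y = (c:ℝ)-ε) := by
  by_cases hi : i = n
  · subst hi
    have hk : k % 2 = 1 := by rcases hik with ⟨-, h⟩ | ⟨-, h, -⟩ <;> omega
    rw [pathsB, if_pos rfl] at hp
    obtain ⟨y, hy, -, c, hc⟩ := spin_spinpts hn hik hp
    rcases hc with ⟨h1, h2⟩ | ⟨h1, h2⟩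
    · exact ⟨y, hy, c, by omega, Or.inl h1⟩
    · exact ⟨y, hy, c, by omega, Or.inr h1⟩
  · have hk : k % 2 = 0 := by
      rcases hik with ⟨h, -⟩ | ⟨-, -, h⟩
      · exact absurd h hi
      · exact h
    obtain ⟨ya, yb, hya, hyb, -, -, hca, -⟩ := comp_spinpts hn hik hi hp
    rcases hca with ⟨c, ⟨h1, h2⟩ | ⟨h1, h2⟩⟩
    · exact ⟨ya, hya, c, by omega, Or.inl h1⟩
    · exact ⟨ya, hya, c, by omega, Or.inr h1⟩

lemma iotaB_snd (n : ℕ) (x : ℕ×ℤ) : (iotaB n x).2 = x.2 := by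
  rw [iotaB]; split_ifs <;> rfl

lemma iotaB_spin_fst (n : ℕ) (l : ℤ) : (iotaB n ((n:ℕ), l)).1 = 2*(n:ℤ)-1 := by
  rw [iotaB]; rw [if_pos rfl]

lemma iotaB_shift4_fst {n i : ℕ} {l : ℤ} (hi : i ≠ n) :
    (iotaB n (i, l+4)).1 = (iotaB n (i,l)).1 := by
  rw [iotaB, iotaB]
  rw [if_neg hi, if_neg hi]
  by_cases h : (2 * (n:ℤ) + l - 2 * (i:ℤ)) % 4 = 2
  · rw [if_pos h, if_pos (by omega : (2 * (n:ℤ) + (l+4) - 2 * (i:ℤ)) % 4 = 2)]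
  · rw [if_neg h, if_neg (by omega : ¬ (2 * (n:ℤ) + (l+4) - 2 * (i:ℤ)) % 4 = 2)]

lemma Cp_spin_elim_up {n : ℕ} {ε : ℝ} {p : List (ℝ×ℝ)} {l : ℤ}
    (h : ((n:ℕ),l) ∈ Cp (.B n ε) p true) :
    (2*(n:ℝ)-1, (l:ℝ) - ε) ∈ p ∧ (2*(n:ℝ)-1, (l:ℝ) + ε) ∉ p := by
  obtain ⟨-, hbr⟩ := h
  rcases hbr with ⟨r, -, -, -, -, hne, -, -⟩ | ⟨-, hm⟩
  · exact absurd (iotaB_spin_fst n l) hne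
  · rw [if_pos rfl] at hm; exact hm

lemma Cp_spin_elim_down {n : ℕ} {ε : ℝ} {p : List (ℝ×ℝ)} {l : ℤ}
    (h : ((n:ℕ),l) ∈ Cp (.B n ε) p false) :
    (2*(n:ℝ)-1, (l:ℝ) + ε) ∈ p ∧ (2*(n:ℝ)-1, (l:ℝ) - ε) ∉ p := by
  obtain ⟨-, hbr⟩ := h
  rcases hbr with ⟨r, -, -, -, -, hne, -, -⟩ | ⟨-, hm⟩
  · exact absurd (iotaB_spin_fst n l) hne
  · rw [if_neg (by simp)] at hm; exact hm

lemma Cp_spin_mk_up {n : ℕ} {ε : ℝ} {p : List (ℝ×ℝ)} {l : ℤ} (hX : ((n:ℕ),l) ∈ XB n)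
    (h1 : (2*(n:ℝ)-1, (l:ℝ) - ε) ∈ p) (h2 : (2*(n:ℝ)-1, (l:ℝ) + ε) ∉ p) :
    ((n:ℕ),l) ∈ Cp (.B n ε) p true :=
  ⟨hX, Or.inr ⟨rfl, by rw [if_pos rfl]; exact ⟨h1, h2⟩⟩⟩

lemma Cp_spin_mk_down {n : ℕ} {ε : ℝ} {p : List (ℝ×ℝ)} {l : ℤ} (hX : ((n:ℕ),l) ∈ XB n)
    (h1 : (2*(n:ℝ)-1, (l:ℝ) + ε) ∈ p) (h2 : (2*(n:ℝ)-1, (l:ℝ) - ε) ∉ p) :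
    ((n:ℕ),l) ∈ Cp (.B n ε) p false :=
  ⟨hX, Or.inr ⟨rfl, by rw [if_neg (by simp)]; exact ⟨h1, h2⟩⟩⟩

lemma Cp_off_elim_up {n : ℕ} {ε : ℝ} {p : List (ℝ×ℝ)} {i : ℕ} {l : ℤ} (hi : i ≠ n)
    (h : (i,l) ∈ Cp (.B n ε) p true) :
    ∃ r, 1 ≤ r ∧ r + 1 < p.length ∧ pt p r = (((iotaB n (i,l)).1 : ℝ), (l:ℝ)) ∧
      (iotaB n (i,l)).1 ≠ 0 ∧ (iotaB n (i,l)).1 ≠ 2*(n:ℤ)-1 ∧ (iotaB n (i,l)).1 ≠ 4*(n:ℤ)-2 ∧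
      (pt p r).2 < (pt p (r-1)).2 ∧ (pt p r).2 < (pt p (r+1)).2 := by
  obtain ⟨-, hbr⟩ := h
  rcases hbr with ⟨r, h1, h2, h3, h4, h5, h6, h7⟩ | ⟨hn', -⟩
  · rw [if_pos rfl] at h7
    refine ⟨r, h1, h2, ?_, h4, h5, h6, h7.1, h7.2⟩
    rw [h3, iotaB_snd]
  · exact absurd hn' hi

lemma Cp_off_elim_down {n : ℕ} {ε : ℝ} {p : List (ℝ×ℝ)} {i : ℕ} {l : ℤ} (hi : i ≠ n)
    (h : (i,l) ∈ Cp (.B n ε) p false) :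
    ∃ r, 1 ≤ r ∧ r + 1 < p.length ∧ pt p r = (((iotaB n (i,l)).1 : ℝ), (l:ℝ)) ∧
      (iotaB n (i,l)).1 ≠ 0 ∧ (iotaB n (i,l)).1 ≠ 2*(n:ℤ)-1 ∧ (iotaB n (i,l)).1 ≠ 4*(n:ℤ)-2 ∧
      (pt p (r-1)).2 < (pt p r).2 ∧ (pt p (r+1)).2 < (pt p r).2 := by
  obtain ⟨-, hbr⟩ := h
  rcases hbr with ⟨r, h1, h2, h3, h4, h5, h6, h7⟩ | ⟨hn', -⟩
  · rw [if_neg (by simp)] at h7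
    refine ⟨r, h1, h2, ?_, h4, h5, h6, h7.1, h7.2⟩
    rw [h3, iotaB_snd]
  · exact absurd hn' hi

/-- for `(p_t) ∈ 𝒫̄` with `m = ∏ m(p_t)`: (i) every exponent `u_{i,ℓ}(m)`,
`(i,ℓ) ∈ X`, lies in `{-1,0,1}`; (ii) for no `(i,ℓ)` with `(i,ℓ), (i,ℓ+2r_i) ∈ X` do we have
`u_{i,ℓ}(m) = 1` and `u_{i,ℓ+2r_i}(m) = -1`. -/
theorem stmt19 (S : Setting) (hS : S.valid) {T : ℕ} (hT : 1 ≤ T)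
    (w : Fin T → ℕ × ℤ) (hw : IsSnake S w)
    (ps : Fin T → List (ℝ × ℝ)) (hps : ps ∈ PBar S w) :
    (∀ i : ℕ, ∀ l : ℤ, (i, l) ∈ X S →
      tmon S ps (i, l) = -1 ∨ tmon S ps (i, l) = 0 ∨ tmon S ps (i, l) = 1) ∧
    (∀ i : ℕ, ∀ l : ℤ, (i, l) ∈ X S → (i, l + 2 * (rr S i : ℤ)) ∈ X S →
      ¬(tmon S ps (i, l) = 1 ∧ tmon S ps (i, l + 2 * (rr S i : ℤ)) = -1)) := by
  obtain ⟨hP, hNO⟩ := hps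
  have hdist : ∀ (up : Bool) (x : ℕ×ℤ) (s t : Fin T),
      x ∈ Cp S (ps s) up → x ∈ Cp S (ps t) up → s = t := by
    intro up x s t hcs hct
    by_contra hne
    rcases lt_or_gt_of_ne hne with h | h
    · exact lt_irrefl _ (hNO s t h _ (key_mem hcs) _ (key_mem hct) rfl)
    · exact lt_irrefl _ (hNO t s h _ (key_mem hct) _ (key_mem hcs) rfl)
  have htm : ∀ x, tmon S ps x = ∑ t, mon S (ps t) x := by
    intro x; rw [tmon]; simp
  have hkey := fun x => sum_aux (fun t => mon S (ps t) x) (fun t => mon_range S (ps t) x)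
    (fun s t h1 h2 => hdist true x s t
      ((mon_eq_one_iff S (ps s) x).mp h1).1 ((mon_eq_one_iff S (ps t) x).mp h2).1)
    (fun s t h1 h2 => hdist false x s t
      ((mon_eq_neg_one_iff S (ps s) x).mp h1).1 ((mon_eq_neg_one_iff S (ps t) x).mp h2).1)
  constructor
  · intro i l _; rw [htm]; exact (hkey (i,l)).1
  · rintro i l hx hx' ⟨h1, h2⟩
    rw [htm] at h1 h2
    obtain ⟨t, ht, hno1⟩ := (hkey (i,l)).2.1 h1
    obtain ⟨s, hs, hno2⟩ := (hkey (i, l + 2 * (rr S i : ℤ))).2.2 h2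
    rw [mon_eq_one_iff] at ht
    rw [mon_eq_neg_one_iff] at hs
    -- hno1 : ∀ u, mon S (ps u) (i,l) ≠ -1 ; hno2 : ∀ u, mon S (ps u) (i, l+2r) ≠ 1
    cases S with
    | A n =>
      have hrr : l + 2 * (rr (Setting.A n) i : ℤ) = l + 2 := by norm_num [rr]
      rw [hrr] at hs
      obtain ⟨⟨hi1, hin, htp, htm1, _⟩, _⟩ := ht
      obtain ⟨⟨_, _, hsp, hsm1, _⟩, _⟩ := hs
      obtain ⟨hlt, hxt, _⟩ := hP t
      obtain ⟨hls, hxs, _⟩ := hP s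
      have hT1 : pt (ps t) (i-1) = (((i-1 : ℕ):ℝ), (l:ℝ)+1) := by
        refine Prod.ext (hxt (i-1) (by omega)) ?_
        simpa using htm1
      have hS1 : pt (ps s) (i-1) = (((i-1 : ℕ):ℝ), (l:ℝ)+1) := by
        refine Prod.ext (hxs (i-1) (by omega)) ?_
        simp only [hsm1]; push_cast; ring
      by_cases hst : s = t
      · subst hst
        have heq : ((i:ℝ), (l:ℝ)) = ((i:ℝ), ((l+2:ℤ):ℝ)) := htp.symm.trans hsp
        rw [Prod.ext_iff] at heq
        have := heq.2
        push_cast at this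
        linarith
      · have hmt : (((i-1 : ℕ):ℝ), (l:ℝ)+1) ∈ ps t := by rw [← hT1]; exact pt_mem (by omega)
        have hms : (((i-1 : ℕ):ℝ), (l:ℝ)+1) ∈ ps s := by rw [← hS1]; exact pt_mem (by omega)
        rcases lt_or_gt_of_ne hst with h|h
        · exact lt_irrefl _ (hNO s t h _ hms _ hmt rfl)
        · exact lt_irrefl _ (hNO t s h _ hmt _ hms rfl)
    | B n ε =>
      obtain ⟨hn, hε, hε2⟩ := hS
      have hnn : 1 ≤ n := by omega
      have hwX : ∀ u : Fin T, w u ∈ XB n := hw.1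
      have hPu : ∀ u : Fin T, ps u ∈ pathsB n ε (w u).1 (w u).2 := hP
      by_cases hi : i = n
      · -- spin case
        subst i
        have hrr : l + 2 * (rr (Setting.B n ε) n : ℤ) = l + 2 := by simp [rr]
        rw [hrr] at hs hno2 hx'
        have hlodd : l % 2 = 1 := by
          rcases hx with ⟨-, h⟩ | ⟨-, h2, -⟩
          · exact h
          · omega
        have hc2 : ((l+2:ℤ):ℝ) = (l:ℝ)+2 := by push_cast; ring
        obtain ⟨hA, hA'⟩ := Cp_spin_elim_up ht.1
        obtain ⟨hD0, hD0'⟩ := Cp_spin_elim_down hs.1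
        rw [hc2] at hD0 hD0'
        have hord : ∀ (u v : Fin T), u < v → ∀ y y' : ℝ,
            (2*(n:ℝ)-1, y) ∈ ps u → (2*(n:ℝ)-1, y') ∈ ps v → y < y' :=
          fun u v huv y y' h1 h2 => hNO u v huv _ h1 _ h2 rfl
        have hmkm : ∀ u : Fin T, (2*(n:ℝ)-1, (l:ℝ)+ε) ∈ ps u →
            (2*(n:ℝ)-1, (l:ℝ)-ε) ∉ ps u → False := by
          intro u h1 h2
          apply hno1 u
          rw [mon_eq_neg_one_iff]
          exact ⟨Cp_spin_mk_down hx h1 h2, fun hc => h2 (Cp_spin_elim_up hc).1⟩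
        have hmkp : ∀ u : Fin T, (2*(n:ℝ)-1, (l:ℝ)+2-ε) ∈ ps u →
            (2*(n:ℝ)-1, (l:ℝ)+2+ε) ∉ ps u → False := by
          intro u h1 h2
          apply hno2 u
          rw [mon_eq_one_iff]
          refine ⟨Cp_spin_mk_up hx' (by rw [hc2]; exact h1) (by rw [hc2]; exact h2), fun hc => ?_⟩
          have h3 := (Cp_spin_elim_down hc).1
          rw [hc2] at h3
          exact h2 h3
        have hspinpt : ∀ u : Fin T, (w u).1 = n →
            ∃ y, (2*(n:ℝ)-1, y) ∈ ps u ∧ (∀ q ∈ ps u, q.1 = 2*(n:ℝ)-1 → q.2 = y) ∧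
              (∃ c : ℤ, (y = (c:ℝ) + ε ∧ c % 4 = ((w u).2+2) % 4) ∨
                        (y = (c:ℝ) - ε ∧ c % 4 = (w u).2 % 4)) := by
          intro u hu
          have h1 : ps u ∈ pathsBspin n ε (w u).2 := by
            have h2 := hPu u
            rwa [hu, pathsB, if_pos rfl] at h2
          have h2 : ((n:ℕ), (w u).2) ∈ XB n := by
            have h3 := hwX u
            rwa [show w u = ((n:ℕ), (w u).2) from Prod.ext hu rfl] at h3
          exact spin_spinpts hnn h2 h1
        have hst : t < s := by
          rcases lt_trichotomy t s with h | h | h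
          · exact h
          · exfalso
            subst h
            by_cases hwn : (w t).1 = n
            · obtain ⟨y, -, huniq, -⟩ := hspinpt t hwn
              have e1 := huniq _ hA rfl
              have e2 := huniq _ hD0 rfl
              simp only at e1 e2
              rw [← e1] at e2
              linarith
            · obtain ⟨ya, yb, hya, hyb, hba, hcover, hca, hcb⟩ :=
                comp_spinpts hnn (hwX t) hwn (hPu t)
              have h1 := hcover _ hA rfl
              have h2 := hcover _ hD0 rfl
              simp only at h1 h2
              have hkt : (w t).2 % 2 = 0 := by
                rcases hwX t with ⟨h, -⟩ | ⟨-, -, h⟩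
                · exact absurd h hwn
                · exact h
              rcases h1 with h1 | h1 <;> rcases h2 with h2 | h2
              · rw [← h1] at h2; linarith
              · rw [← h1, ← h2] at hba; linarith
              · have m1 := end_id_minus hε hε2 hcb (by rw [← h1])
                have m2 := end_id_plus hε hε2 hca (by rw [← h2, hc2])
                omega
              · rw [← h1] at h2; linarith
          · exfalso
            have := hord s t h _ _ hD0 hA
            linarith
        have hmid : ∀ u : Fin T, t < u → u < s → False := by
          intro u hu1 hu2
          obtain ⟨y, hy, c, hc, hyc⟩ := any_spinpt hnn (hwX u) (hPu u)
          have hb1 : (l:ℝ) - ε < y := hord t u hu1 _ _ hA hy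
          have hb2 : y < (l:ℝ)+2+ε := hord u s hu2 _ _ hy hD0
          rcases eps_interval hε hε2 hc hlodd hyc hb1 hb2 with h | h
          · refine hmkm u (h ▸ hy) (fun hc' => ?_)
            exact lt_irrefl _ (hord t u hu1 _ _ hA hc')
          · refine hmkp u (h ▸ hy) (fun hc' => ?_)
            exact lt_irrefl _ (hord u s hu2 _ _ hc' hD0)
        have hs1 : (s:ℕ) = (t:ℕ) + 1 := by
          by_contra hcon
          have h1 : (t:ℕ)+1 < (s:ℕ) := by
            have := hst
            rw [Fin.lt_def] at this
            omega
          exact hmid ⟨(t:ℕ)+1, by omega⟩ (by rw [Fin.lt_def]; simp) (by rw [Fin.lt_def]; simpa)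
        have hsnake := hw.2 t (by rw [← hs1]; exact s.isLt)
        have hws : w ⟨(t:ℕ)+1, by rw [← hs1]; exact s.isLt⟩ = w s := by
          congr 1
          exact Fin.ext hs1.symm
        rw [hws] at hsnake
        have hend_t : ((w t).1 = n ∧ l % 4 = (w t).2 % 4) ∨
            ((w t).1 ≠ n ∧ l % 4 = ((w t).2 - (2*(n:ℤ) - 2*((w t).1:ℤ) - 1)) % 4) := by
          by_cases hwn : (w t).1 = n
          · left
            refine ⟨hwn, ?_⟩
            obtain ⟨y, -, huniq, hspec⟩ := hspinpt t hwn
            have e1 := huniq _ hA rfl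
            simp only at e1
            exact end_id_minus hε hε2 hspec (by rw [← e1])
          · right
            refine ⟨hwn, ?_⟩
            obtain ⟨ya, yb, hya, hyb, hba, hcover, hca, hcb⟩ :=
              comp_spinpts hnn (hwX t) hwn (hPu t)
            have h1 := hcover _ hA rfl
            simp only at h1
            rcases h1 with h1 | h1
            · exact end_id_minus hε hε2 hca (by rw [← h1])
            · exfalso
              have hya_lt : ya < (l:ℝ)+2+ε := hord t s hst _ _ hya hD0
              have hya_gt : (l:ℝ)-ε < ya := by rw [h1]; exact hba
              have hkt : (w t).2 % 2 = 0 := by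
                rcases hwX t with ⟨h, -⟩ | ⟨-, -, h⟩
                · exact absurd h hwn
                · exact h
              obtain ⟨c, hcspec⟩ := hca
              have hcodd : c % 2 = 1 := by rcases hcspec with ⟨-, h⟩ | ⟨-, h⟩ <;> omega
              have hyform : ya = (c:ℝ)+ε ∨ ya = (c:ℝ)-ε := by
                rcases hcspec with ⟨h, -⟩ | ⟨h, -⟩
                · exact Or.inl h
                · exact Or.inr h
              rcases eps_interval hε hε2 hcodd hlodd hyform hya_gt hya_lt with h2 | h2
              · exact hA' (h2 ▸ hya)
              · exact hmkp t (h2 ▸ hya)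
                  (fun hc' => lt_irrefl _ (hord t s hst _ _ hc' hD0))
        have hend_s : ((w s).1 = n ∧ (l+2) % 4 = ((w s).2 + 2) % 4) ∨
            ((w s).1 ≠ n ∧ (l+2) % 4 = (((w s).2 + (2*(n:ℤ) - 2*((w s).1:ℤ) - 1)) + 2) % 4) := by
          by_cases hwn : (w s).1 = n
          · left
            refine ⟨hwn, ?_⟩
            obtain ⟨y, -, huniq, hspec⟩ := hspinpt s hwn
            have e1 := huniq _ hD0 rfl
            simp only at e1
            exact end_id_plus hε hε2 hspec (by rw [← e1, hc2])
          · right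
            refine ⟨hwn, ?_⟩
            obtain ⟨ya, yb, hya, hyb, hba, hcover, hca, hcb⟩ :=
              comp_spinpts hnn (hwX s) hwn (hPu s)
            have h1 := hcover _ hD0 rfl
            simp only at h1
            rcases h1 with h1 | h1
            · exfalso
              have hyb_gt : (l:ℝ)-ε < yb := hord t s hst _ _ hA hyb
              have hyb_lt : yb < (l:ℝ)+2+ε := by rw [h1]; exact hba
              have hks : (w s).2 % 2 = 0 := by
                rcases hwX s with ⟨h, -⟩ | ⟨-, -, h⟩
                · exact absurd h hwn
                · exact h
              obtain ⟨c, hcspec⟩ := hcb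
              have hcodd : c % 2 = 1 := by rcases hcspec with ⟨-, h⟩ | ⟨-, h⟩ <;> omega
              have hyform : yb = (c:ℝ)+ε ∨ yb = (c:ℝ)-ε := by
                rcases hcspec with ⟨h, -⟩ | ⟨h, -⟩
                · exact Or.inl h
                · exact Or.inr h
              rcases eps_interval hε hε2 hcodd hlodd hyform hyb_gt hyb_lt with h2 | h2
              · exact hmkm s (h2 ▸ hyb)
                  (fun hc' => lt_irrefl _ (hord t s hst _ _ hA hc'))
              · exact hD0' (h2 ▸ hyb)
            · exact end_id_plus hε hε2 hcb (by rw [← h1, hc2])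
        rcases hend_t with ⟨hwtn, m1⟩ | ⟨hwtn, m1⟩ <;>
          rcases hend_s with ⟨hwsn, m2⟩ | ⟨hwsn, m2⟩ <;>
          simp only [SnakePos] at hsnake
        · rw [if_pos ⟨hwtn, hwsn⟩] at hsnake
          omega
        · rw [if_neg (fun hc => hwsn hc.2), if_pos (Or.inl hwtn)] at hsnake
          rcases abs_cases (((w s).1:ℤ) - ((w t).1:ℤ)) with ⟨he, -⟩ | ⟨he, -⟩ <;>
            rw [he] at hsnake <;> omega
        · rw [if_neg (fun hc => hwtn hc.1), if_pos (Or.inr hwsn)] at hsnake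
          rcases abs_cases (((w s).1:ℤ) - ((w t).1:ℤ)) with ⟨he, -⟩ | ⟨he, -⟩ <;>
            rw [he] at hsnake <;> omega
        · rw [if_neg (fun hc => hwtn hc.1), if_neg (fun hc => hc.elim hwtn hwsn)] at hsnake
          rcases abs_cases (((w s).1:ℤ) - ((w t).1:ℤ)) with ⟨he, -⟩ | ⟨he, -⟩ <;>
            rw [he] at hsnake <;> omega
      · -- off-spin case
        have hrr : l + 2 * (rr (Setting.B n ε) i : ℤ) = l + 4 := by
          simp [rr, hi]
        rw [hrr] at hs hno2 hx'
        obtain ⟨hi1, hiltn, hlev⟩ : 1 ≤ i ∧ i < n ∧ l % 2 = 0 := by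
          rcases hx with ⟨h, -⟩ | ⟨a, b, c⟩
          · exact absurd h hi
          · exact ⟨a, b, c⟩
        obtain ⟨r, hr1, hr2, hptr, -, h01, -, hud1, hud2⟩ := Cp_off_elim_up hi ht.1
        obtain ⟨r', hr1', hr2', hptr', -, -, -, hud1', hud2'⟩ := Cp_off_elim_down hi hs.1
        rw [iotaB_shift4_fst hi] at hptr'
        have hcast4 : ((l+4:ℤ):ℝ) = (l:ℝ)+4 := by push_cast; ring
        rw [hcast4] at hptr'
        set X0 : ℤ := (iotaB n (i,l)).1 with hX0
        have hfst_t : (pt (ps t) r).1 = (X0:ℝ) := by rw [hptr]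
        have hfst_s : (pt (ps s) r').1 = (X0:ℝ) := by rw [hptr']
        have hsnd_t : (pt (ps t) r).2 = (l:ℝ) := by rw [hptr]
        have hsnd_s : (pt (ps s) r').2 = (l:ℝ)+4 := by rw [hptr']
        have hneX : (X0:ℝ) ≠ 2*(n:ℝ)-1 := by
          rw [← cast2n1]
          exact fun hc => h01 (by exact_mod_cast hc)
        obtain ⟨r1, hl1, ho1, hx1, hy1⟩ :=
          path_nbr hnn (hPu t) hr1 hr2 (by rw [hfst_t]; exact hneX)
        obtain ⟨r1', hl1', ho1', hx1', hy1'⟩ :=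
          path_nbr hnn (hPu s) hr1' hr2' (by rw [hfst_s]; exact hneX)
        rw [hfst_t] at hx1
        rw [hfst_s] at hx1'
        have hyt : (pt (ps t) r1).2 = (l:ℝ) + 2 := by
          have hgt : (pt (ps t) r).2 < (pt (ps t) r1).2 := by
            rcases ho1 with h | h
            · rw [h]; exact hud1
            · rw [h]; exact hud2
          rw [hsnd_t] at hgt
          rw [hsnd_t] at hy1
          rcases hy1 with h | h
          · exact h
          · rw [h] at hgt; linarith
        have hys : (pt (ps s) r1').2 = (l:ℝ) + 2 := by
          have hlt' : (pt (ps s) r1').2 < (pt (ps s) r').2 := by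
            rcases ho1' with h | h
            · rw [h]; exact hud1'
            · rw [h]; exact hud2'
          rw [hsnd_s] at hlt'
          rw [hsnd_s] at hy1'
          rcases hy1' with h | h
          · rw [h] at hlt'; linarith
          · rw [h]; ring
        have hq_t : pt (ps t) r1 =
            ((X0:ℝ) + (if (X0:ℝ) < 2*(n:ℝ)-1 then (-2:ℝ) else 2), (l:ℝ)+2) :=
          Prod.ext hx1 hyt
        have hq_s : pt (ps s) r1' =
            ((X0:ℝ) + (if (X0:ℝ) < 2*(n:ℝ)-1 then (-2:ℝ) else 2), (l:ℝ)+2) :=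
          Prod.ext hx1' hys
        by_cases hst : s = t
        · subst hst
          have hrr' : r = r' :=
            path_uniq hnn (hwX s) (hPu s) (by omega) (by omega)
              (hfst_t.trans hfst_s.symm) (by rw [hfst_t]; exact hneX)
          rw [hrr', hsnd_s] at hsnd_t
          linarith
        · have hm1 : ((X0:ℝ) + (if (X0:ℝ) < 2*(n:ℝ)-1 then (-2:ℝ) else 2), (l:ℝ)+2) ∈ ps t := by
            rw [← hq_t]; exact pt_mem hl1
          have hm2 : ((X0:ℝ) + (if (X0:ℝ) < 2*(n:ℝ)-1 then (-2:ℝ) else 2), (l:ℝ)+2) ∈ ps s := by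
            rw [← hq_s]; exact pt_mem hl1'
          rcases lt_or_gt_of_ne hst with h | h
          · exact lt_irrefl _ (hNO s t h _ hm2 _ hm1 rfl)
          · exact lt_irrefl _ (hNO t s h _ hm1 _ hm2 rfl)

end Paper
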